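/- Let N ≥ 1, p > 1, κ > 0 and 0 < ν ≤ C, and let Ψ : ℝ^N → ℝ be of class C² satisfying the sandwich condition for Ψ_{p,κ} with constants ν, C. Then for every η, ξ ∈ ℝ^N: ν · min{p−1, 1} · (κ² + |η|²)^{(p−2)/2} |ξ|² ≤ Ψ''(η)[ξ]² ≤ C · max{p−1, 1} · (κ² + |η|²)^{(p−2)/2} |ξ|², where Ψ''(η)[ξ]² denotes the second derivative of Ψ at η evaluated as a quadratic form at ξ. -/

import Mathlib

open Filter Topology

/-- The function `Ψ_{p,κ}(ξ) = (1/p) * ((κ² + |ξ|²)^(p/2) - κ^p)`. -/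
noncomputable def PsiPK (N : ℕ) (p κ : ℝ) (ξ : EuclideanSpace ℝ (Fin N)) : ℝ :=
  (1 / p) * ((κ ^ 2 + ‖ξ‖ ^ 2) ^ (p / 2) - κ ^ p)

/-- `Ψ` satisfies the sandwich condition for `Ψ_{p,κ}` with constants `ν ≤ C`:
both `Ψ - ν Ψ_{p,κ}` and `C Ψ_{p,κ} - Ψ` are convex. -/
def SandwichCond (N : ℕ) (p κ ν C : ℝ) (Ψ : EuclideanSpace ℝ (Fin N) → ℝ) : Prop :=
  ConvexOn ℝ Set.univ (fun ξ => Ψ ξ - ν * PsiPK N p κ ξ) ∧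
    ConvexOn ℝ Set.univ (fun ξ => C * PsiPK N p κ ξ - Ψ ξ)


open RealInnerProductSpace

section Aux

variable {N : ℕ}

lemma line_hasDerivAt (f : EuclideanSpace ℝ (Fin N) → ℝ) (hf : ContDiff ℝ 2 f)
    (η ξ : EuclideanSpace ℝ (Fin N)) (t : ℝ) :
    HasDerivAt (fun s : ℝ => f (η + s • ξ)) (fderiv ℝ f (η + t • ξ) ξ) t := by
  have hL : HasDerivAt (fun s : ℝ => η + s • ξ) ξ t := by
    simpa using ((hasDerivAt_id t).smul_const ξ).const_add η
  have hfd : DifferentiableAt ℝ f (η + t • ξ) :=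
    (hf.differentiable (by norm_num)).differentiableAt
  exact hfd.hasFDerivAt.comp_hasDerivAt t hL

lemma line_hasDerivAt2 (f : EuclideanSpace ℝ (Fin N) → ℝ) (hf : ContDiff ℝ 2 f)
    (η ξ : EuclideanSpace ℝ (Fin N)) :
    HasDerivAt (fun s : ℝ => fderiv ℝ f (η + s • ξ) ξ)
      ((fderiv ℝ (fderiv ℝ f) η ξ) ξ) 0 := by
  have hL : HasDerivAt (fun s : ℝ => η + s • ξ) ξ 0 := by
    simpa using ((hasDerivAt_id (0:ℝ)).smul_const ξ).const_add η
  have h1 : ContDiff ℝ 1 (fderiv ℝ f) := hf.fderiv_right (by norm_num)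
  have hd : HasFDerivAt (fderiv ℝ f) (fderiv ℝ (fderiv ℝ f) η) η :=
    ((h1.differentiable (by norm_num)) η).hasFDerivAt
  have h0 : η + (0:ℝ) • ξ = η := by simp
  rw [← h0] at hd
  have hc : HasDerivAt (fun s : ℝ => fderiv ℝ f (η + s • ξ))
      (fderiv ℝ (fderiv ℝ f) (η + (0:ℝ) • ξ) ξ) 0 := hd.comp_hasDerivAt 0 hL
  have := hc.clm_apply (hasDerivAt_const 0 ξ)
  simpa [h0] using this

lemma mono_hasDerivAt_nonneg {g : ℝ → ℝ} {c : ℝ} (hm : Monotone g)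
    (h : HasDerivAt g c 0) : 0 ≤ c := by
  have ht : Filter.Tendsto (slope g 0) (𝓝[>] (0:ℝ)) (𝓝 c) :=
    (hasDerivAt_iff_tendsto_slope.mp h).mono_left
      (nhdsWithin_mono 0 (fun x hx => Set.mem_compl_singleton_iff.mpr (LT.lt.ne' hx)))
  refine ge_of_tendsto ht ?_
  filter_upwards [self_mem_nhdsWithin] with t (ht' : 0 < t)
  have : g 0 ≤ g t := hm ht'.le
  rw [slope_def_field]
  exact div_nonneg (by linarith) (by linarith)

/-- bounds on the 1-D second derivative value of `PsiPK` along a line. -/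
lemma c_bounds {p Q a b : ℝ} (hp : 1 < p) (hQ : 0 < Q) (hb : 0 ≤ b) (ha2 : a ^ 2 ≤ Q * b) :
    min (p - 1) 1 * Q ^ (p / 2 - 1) * b ≤
        (p - 2) * Q ^ (p / 2 - 2) * a ^ 2 + Q ^ (p / 2 - 1) * b ∧
      (p - 2) * Q ^ (p / 2 - 2) * a ^ 2 + Q ^ (p / 2 - 1) * b ≤
        max (p - 1) 1 * Q ^ (p / 2 - 1) * b := by
  have h1 : (0:ℝ) < Q ^ (p / 2 - 1) := Real.rpow_pos_of_pos hQ _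
  have h2 : (0:ℝ) < Q ^ (p / 2 - 2) := Real.rpow_pos_of_pos hQ _
  have hQpow : Q ^ (p / 2 - 2) * Q = Q ^ (p / 2 - 1) := by
    nth_rewrite 2 [← Real.rpow_one Q]
    rw [← Real.rpow_add hQ]
    ring_nf
  have ha0 : (0:ℝ) ≤ a ^ 2 := sq_nonneg a
  have hkey : Q ^ (p / 2 - 2) * a ^ 2 ≤ Q ^ (p / 2 - 1) * b := by
    calc Q ^ (p / 2 - 2) * a ^ 2 ≤ Q ^ (p / 2 - 2) * (Q * b) :=
          mul_le_mul_of_nonneg_left ha2 h2.le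
    _ = Q ^ (p / 2 - 1) * b := by rw [← hQpow]; ring
  have hterm : (0:ℝ) ≤ Q ^ (p / 2 - 2) * a ^ 2 := mul_nonneg h2.le ha0
  rcases le_or_gt 2 p with h | h
  · rw [min_eq_right (by linarith), max_eq_left (by linarith)]
    have h3 : (p - 2) * (Q ^ (p / 2 - 2) * a ^ 2) ≤ (p - 2) * (Q ^ (p / 2 - 1) * b) :=
      mul_le_mul_of_nonneg_left hkey (by linarith)
    have h4 : (0:ℝ) ≤ (p - 2) * (Q ^ (p / 2 - 2) * a ^ 2) :=
      mul_nonneg (by linarith) hterm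
    constructor <;> nlinarith [h1.le, hb]
  · rw [min_eq_left (by linarith), max_eq_right (by linarith)]
    have h3 : (p - 2) * (Q ^ (p / 2 - 1) * b) ≤ (p - 2) * (Q ^ (p / 2 - 2) * a ^ 2) :=
      mul_le_mul_of_nonpos_left hkey (by linarith)
    have h4 : (p - 2) * (Q ^ (p / 2 - 2) * a ^ 2) ≤ 0 :=
      mul_nonpos_of_nonpos_of_nonneg (by linarith) hterm
    constructor <;> nlinarith [h1.le, hb]


lemma psi_line_deriv {N : ℕ} {p κ : ℝ} (hp : p ≠ 0) (hκ : 0 < κ) (η ξ : EuclideanSpace ℝ (Fin N)) :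
    ∃ D : ℝ → ℝ,
      (∀ t : ℝ, HasDerivAt (fun s : ℝ => PsiPK N p κ (η + s • ξ)) (D t) t) ∧
      HasDerivAt D ((p - 2) * (κ ^ 2 + ‖η‖ ^ 2) ^ (p / 2 - 2) * ⟪η, ξ⟫ ^ 2
        + (κ ^ 2 + ‖η‖ ^ 2) ^ (p / 2 - 1) * ‖ξ‖ ^ 2) 0 := by
  set Q : ℝ := κ ^ 2 + ‖η‖ ^ 2 with hQdef
  set a : ℝ := ⟪η, ξ⟫ with hadef
  set b : ℝ := ‖ξ‖ ^ 2 with hbdef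
  set q : ℝ → ℝ := fun t => Q + 2 * t * a + t ^ 2 * b with hqdef
  have hnorm : ∀ t : ℝ, ‖η + t • ξ‖ ^ 2 = ‖η‖ ^ 2 + 2 * t * a + t ^ 2 * b := by
    intro t
    rw [norm_add_sq_real, real_inner_smul_right, norm_smul]
    simp only [hadef, hbdef, Real.norm_eq_abs, mul_pow, sq_abs]
    ring
  have hqline : ∀ t : ℝ, q t = κ ^ 2 + ‖η + t • ξ‖ ^ 2 := by
    intro t; rw [hnorm t, hqdef, hQdef]; ring
  have hq_pos : ∀ t : ℝ, 0 < q t := by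
    intro t; rw [hqline t]; positivity
  have hcomp : ∀ t : ℝ, PsiPK N p κ (η + t • ξ) = (1 / p) * ((q t) ^ (p / 2) - κ ^ p) := by
    intro t
    rw [PsiPK, hqline t]
  have hq' : ∀ t : ℝ, HasDerivAt q (2 * a + 2 * t * b) t := by
    intro t
    have h1 : HasDerivAt (fun s : ℝ => s) 1 t := (hasDerivAt_id t : HasDerivAt (fun s : ℝ => s) 1 t)
    have h2 : HasDerivAt (fun s : ℝ => s ^ 2) (2 * t) t := by
      simpa using hasDerivAt_pow 2 t
    have h := (((h1.const_mul 2).mul_const a).const_add Q).add (h2.mul_const b)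
    refine h.congr_deriv ?_
    ring
  have hv' : ∀ t : ℝ, HasDerivAt (fun s : ℝ => 2 * a + 2 * s * b) (2 * b) t := by
    intro t
    have h1 : HasDerivAt (fun s : ℝ => s) 1 t := (hasDerivAt_id t : HasDerivAt (fun s : ℝ => s) 1 t)
    have h := ((h1.const_mul 2).mul_const b).const_add (2 * a)
    refine h.congr_deriv ?_
    ring
  refine ⟨fun t => (2 * a + 2 * t * b) * (q t) ^ (p / 2 - 1) / 2, fun t => ?_, ?_⟩
  · have h1 : HasDerivAt (fun s : ℝ => (q s) ^ (p / 2))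
        ((2 * a + 2 * t * b) * (p / 2) * (q t) ^ (p / 2 - 1)) t :=
      (hq' t).rpow_const (Or.inl (hq_pos t).ne')
    have h2 := (h1.sub_const (κ ^ p)).const_mul (1 / p)
    rw [show (fun s : ℝ => PsiPK N p κ (η + s • ξ))
        = fun s : ℝ => (1 / p) * ((q s) ^ (p / 2) - κ ^ p) from funext hcomp]
    refine h2.congr_deriv ?_
    field_simp
  · have hu : HasDerivAt (fun s : ℝ => (q s) ^ (p / 2 - 1))
        ((2 * a + 2 * 0 * b) * (p / 2 - 1) * (q 0) ^ (p / 2 - 1 - 1)) 0 :=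
      (hq' 0).rpow_const (Or.inl (hq_pos 0).ne')
    have h := ((hv' 0).mul hu).div_const 2
    refine h.congr_deriv ?_
    have hq0 : q 0 = Q := by rw [hqdef]; ring
    rw [hq0, show p / 2 - 1 - 1 = p / 2 - 2 from by ring]
    ring

lemma convexOn_line {N : ℕ} {f : EuclideanSpace ℝ (Fin N) → ℝ}
    (hf : ConvexOn ℝ Set.univ f) (η ξ : EuclideanSpace ℝ (Fin N)) :
    ConvexOn ℝ Set.univ (fun t : ℝ => f (η + t • ξ)) := by
  have h := hf.comp_affineMap (AffineMap.lineMap η (η + ξ) : ℝ →ᵃ[ℝ] _)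
  simp only [Function.comp_def, AffineMap.lineMap_apply, vsub_eq_sub, vadd_eq_add,
    add_sub_cancel_left, Set.preimage_univ] at h
  have heq : (fun t : ℝ => f (η + t • ξ)) = fun t : ℝ => f (t • ξ + η) := by
    funext t; rw [add_comm]
  rw [heq]
  exact h


end Aux

/-- If `κ > 0` and `Ψ` is `C²` satisfying the sandwich condition for
`Ψ_{p,κ}` with constants `ν ≤ C`, then the second derivative of `Ψ` as a quadratic form
is pinched between `ν min(p-1,1) (κ²+|η|²)^((p-2)/2) |ξ|²` and
`C max(p-1,1) (κ²+|η|²)^((p-2)/2) |ξ|²`. -/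
theorem stmt_6 (N : ℕ) (hN : 1 ≤ N) (p κ ν C : ℝ) (hp : 1 < p) (hκ : 0 < κ)
    (hν : 0 < ν) (hνC : ν ≤ C)
    (Ψ : EuclideanSpace ℝ (Fin N) → ℝ) (hΨ : ContDiff ℝ 2 Ψ)
    (hsand : SandwichCond N p κ ν C Ψ) :
    ∀ η ξ : EuclideanSpace ℝ (Fin N),
      ν * min (p - 1) 1 * (κ ^ 2 + ‖η‖ ^ 2) ^ ((p - 2) / 2) * ‖ξ‖ ^ 2 ≤
          (fderiv ℝ (fderiv ℝ Ψ) η ξ) ξ ∧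
      (fderiv ℝ (fderiv ℝ Ψ) η ξ) ξ ≤
          C * max (p - 1) 1 * (κ ^ 2 + ‖η‖ ^ 2) ^ ((p - 2) / 2) * ‖ξ‖ ^ 2 := by
  intro η ξ
  have hp0 : p ≠ 0 := by linarith
  have hC : 0 < C := lt_of_lt_of_le hν hνC
  obtain ⟨D, hD, hD0⟩ := psi_line_deriv (N := N) (p := p) (κ := κ) hp0 hκ η ξ
  have hQ : (0:ℝ) < κ ^ 2 + ‖η‖ ^ 2 := by positivity
  have hb0 : (0:ℝ) ≤ ‖ξ‖ ^ 2 := by positivity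
  have ha2 : ⟪η, ξ⟫ ^ 2 ≤ (κ ^ 2 + ‖η‖ ^ 2) * ‖ξ‖ ^ 2 := by
    have h1 : |⟪η, ξ⟫| ≤ ‖η‖ * ‖ξ‖ := abs_real_inner_le_norm η ξ
    have h2 : |⟪η, ξ⟫| * |⟪η, ξ⟫| ≤ (‖η‖ * ‖ξ‖) * (‖η‖ * ‖ξ‖) :=
      mul_self_le_mul_self (abs_nonneg _) h1
    have h3 : ⟪η, ξ⟫ ^ 2 ≤ ‖η‖ ^ 2 * ‖ξ‖ ^ 2 := by
      rw [← sq_abs]; nlinarith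
    nlinarith [sq_nonneg κ, sq_nonneg ‖ξ‖]
  obtain ⟨hlow, hhigh⟩ := c_bounds (Q := κ ^ 2 + ‖η‖ ^ 2) (a := ⟪η, ξ⟫) (b := ‖ξ‖ ^ 2)
    hp hQ hb0 ha2
  set c0 : ℝ := (p - 2) * (κ ^ 2 + ‖η‖ ^ 2) ^ (p / 2 - 2) * ⟪η, ξ⟫ ^ 2
      + (κ ^ 2 + ‖η‖ ^ 2) ^ (p / 2 - 1) * ‖ξ‖ ^ 2 with hc0def
  set H : ℝ := (fderiv ℝ (fderiv ℝ Ψ) η ξ) ξ with hHdef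
  have hφ := line_hasDerivAt Ψ hΨ η ξ
  have hφ2 : HasDerivAt (fun s : ℝ => fderiv ℝ Ψ (η + s • ξ) ξ) H 0 :=
    line_hasDerivAt2 Ψ hΨ η ξ
  -- lower bound
  have hvc : ν * c0 ≤ H := by
    have hg' : ∀ t : ℝ, HasDerivAt
        (fun s : ℝ => Ψ (η + s • ξ) - ν * PsiPK N p κ (η + s • ξ))
        (fderiv ℝ Ψ (η + t • ξ) ξ - ν * D t) t :=
      fun t => (hφ t).sub ((hD t).const_mul ν)
    have hconv : ConvexOn ℝ Set.univ
        (fun t : ℝ => Ψ (η + t • ξ) - ν * PsiPK N p κ (η + t • ξ)) :=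
      convexOn_line hsand.1 η ξ
    have hmono : Monotone (deriv
        (fun s : ℝ => Ψ (η + s • ξ) - ν * PsiPK N p κ (η + s • ξ))) :=
      monotoneOn_univ.mp (hconv.monotoneOn_deriv
        (fun x _ => (hg' x).differentiableAt))
    have hde : deriv (fun s : ℝ => Ψ (η + s • ξ) - ν * PsiPK N p κ (η + s • ξ))
        = fun t : ℝ => fderiv ℝ Ψ (η + t • ξ) ξ - ν * D t :=
      funext fun t => (hg' t).deriv
    have h2 : HasDerivAt
        (deriv (fun s : ℝ => Ψ (η + s • ξ) - ν * PsiPK N p κ (η + s • ξ)))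
        (H - ν * c0) 0 := by
      rw [hde]; exact hφ2.sub (hD0.const_mul ν)
    have := mono_hasDerivAt_nonneg hmono h2
    linarith
  -- upper bound
  have hCc : H ≤ C * c0 := by
    have hg' : ∀ t : ℝ, HasDerivAt
        (fun s : ℝ => C * PsiPK N p κ (η + s • ξ) - Ψ (η + s • ξ))
        (C * D t - fderiv ℝ Ψ (η + t • ξ) ξ) t :=
      fun t => ((hD t).const_mul C).sub (hφ t)
    have hconv : ConvexOn ℝ Set.univ
        (fun t : ℝ => C * PsiPK N p κ (η + t • ξ) - Ψ (η + t • ξ)) :=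
      convexOn_line hsand.2 η ξ
    have hmono : Monotone (deriv
        (fun s : ℝ => C * PsiPK N p κ (η + s • ξ) - Ψ (η + s • ξ))) :=
      monotoneOn_univ.mp (hconv.monotoneOn_deriv
        (fun x _ => (hg' x).differentiableAt))
    have hde : deriv (fun s : ℝ => C * PsiPK N p κ (η + s • ξ) - Ψ (η + s • ξ))
        = fun t : ℝ => C * D t - fderiv ℝ Ψ (η + t • ξ) ξ :=
      funext fun t => (hg' t).deriv
    have h2 : HasDerivAt
        (deriv (fun s : ℝ => C * PsiPK N p κ (η + s • ξ) - Ψ (η + s • ξ)))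
        (C * c0 - H) 0 := by
      rw [hde]; exact (hD0.const_mul C).sub hφ2
    have := mono_hasDerivAt_nonneg hmono h2
    linarith
  rw [show (p - 2) / 2 = p / 2 - 1 from by ring]
  constructor
  · calc ν * min (p - 1) 1 * (κ ^ 2 + ‖η‖ ^ 2) ^ (p / 2 - 1) * ‖ξ‖ ^ 2
        = ν * (min (p - 1) 1 * (κ ^ 2 + ‖η‖ ^ 2) ^ (p / 2 - 1) * ‖ξ‖ ^ 2) := by ring
      _ ≤ ν * c0 := mul_le_mul_of_nonneg_left hlow hν.le
      _ ≤ H := hvc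
  · calc H ≤ C * c0 := hCc
      _ ≤ C * (max (p - 1) 1 * (κ ^ 2 + ‖η‖ ^ 2) ^ (p / 2 - 1) * ‖ξ‖ ^ 2) :=
        mul_le_mul_of_nonneg_left hhigh hC.le
      _ = C * max (p - 1) 1 * (κ ^ 2 + ‖η‖ ^ 2) ^ (p / 2 - 1) * ‖ξ‖ ^ 2 := by ring
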